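/- arXiv:2508.09929 — 2 statements merged into one kernel-verified Lean document; each statement's English description precedes it below -/
import Mathlib

section
/- Let G be a finite group, H a group, φ : G → H an injective homomorphism, N the normalizer of φ(G) in H, and α : N → Out(G) the composition of the conjugation map N → Aut(G) with the projection Aut(G) → Out(G). Then the number of conjugacy classes (under conjugation in N) of injective homomorphisms ψ : G → H with ψ(G) = φ(G) equals |Out(G)| / |image(α)|. -/
/-- Inner-equivalence on automorphisms: `ψ₁ ∼ ψ₂` iff they differ by an inner
automorphism; the quotient `Quot (innRel G)` is `Out(G)`. -/
def innRel (G : Type*) [Group G] : MulAut G → MulAut G → Prop :=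
  fun ψ₁ ψ₂ => ∃ g₀ : G, ∀ g : G, ψ₂ g = g₀ * ψ₁ g * g₀⁻¹

lemma innRel_iff {G : Type*} [Group G] (ψ₁ ψ₂ : MulAut G) :
    innRel G ψ₁ ψ₂ ↔ ψ₂ * ψ₁⁻¹ ∈ (MulAut.conj : G →* MulAut G).range := by
  constructor
  · rintro ⟨g₀, h⟩
    refine ⟨g₀, ?_⟩
    ext g
    simp [MulAut.conj_apply, h (ψ₁.symm g)]
  · rintro ⟨g₀, h⟩
    refine ⟨g₀, fun g => ?_⟩
    have := congrArg (fun (f : MulAut G) => f (ψ₁ g)) h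
    simpa [MulAut.conj_apply] using this.symm

lemma innRel_equivalence (G : Type*) [Group G] : Equivalence (innRel G) := by
  constructor
  · exact fun ψ => ⟨1, by simp⟩
  · rintro ψ₁ ψ₂ ⟨g₀, h⟩
    exact ⟨g₀⁻¹, fun g => by rw [h g]; group⟩
  · rintro ψ₁ ψ₂ ψ₃ ⟨g₀, h⟩ ⟨g₁, h'⟩
    exact ⟨g₁ * g₀, fun g => by rw [h' g, h g]; group⟩

theorem stmt_6 (G H : Type*) [Group G] [Finite G] [Group H]
    (φ : G →* H) (hφ : Function.Injective φ)
    (α : Subgroup.normalizer (φ.range : Set H) →* MulAut G)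
    (hα : ∀ (n : Subgroup.normalizer (φ.range : Set H)) (g : G), φ (α n g) = (n : H) * φ g * (n : H)⁻¹) :
    Nat.card (Quot (fun (ψ₁ ψ₂ : {ψ : G →* H // Function.Injective ψ ∧ ψ.range = φ.range}) =>
        ∃ n ∈ Subgroup.normalizer (φ.range : Set H), ∀ g : G, ψ₂.1 g = n * ψ₁.1 g * n⁻¹)) =
      Nat.card (Quot (innRel G)) /
        Nat.card (Set.range fun n : Subgroup.normalizer (φ.range : Set H) => Quot.mk (innRel G) (α n)) := by
  classical
  have finAut : Finite (MulAut G) :=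
    Finite.of_injective (fun f => (f : G → G)) DFunLike.coe_injective
  set I : Subgroup (MulAut G) := (MulAut.conj : G →* MulAut G).range with hI
  set M : Subgroup (MulAut G) := α.range with hM
  -- inner automorphisms lie in the image of α
  have hIM : I ≤ M := by
    rintro _ ⟨g₀, rfl⟩
    have hn : φ g₀ ∈ Subgroup.normalizer (φ.range : Set H) := by
      rw [Subgroup.mem_normalizer_iff]
      intro h
      constructor
      · rintro ⟨g, rfl⟩; exact ⟨g₀ * g * g₀⁻¹, by simp⟩
      · rintro ⟨g, hg⟩
        refine ⟨g₀⁻¹ * g * g₀, ?_⟩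
        simp [hg]; group
    refine ⟨⟨φ g₀, hn⟩, ?_⟩
    ext g
    apply hφ
    rw [hα ⟨φ g₀, hn⟩ g]
    simp [MulAut.conj_apply]
  -- the equivalence between MulAut G and the subtype of embeddings with the same range
  have hφrange : ∀ σ : MulAut G, (φ.comp σ.toMonoidHom).range = φ.range := by
    intro σ
    ext y
    constructor
    · rintro ⟨g, rfl⟩; exact ⟨σ g, rfl⟩
    · rintro ⟨g, rfl⟩; exact ⟨σ⁻¹ g, by simp⟩
  let eFun : MulAut G → {ψ : G →* H // Function.Injective ψ ∧ ψ.range = φ.range} :=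
    fun σ => ⟨φ.comp σ.toMonoidHom, hφ.comp σ.injective, hφrange σ⟩
  have eBij : Function.Bijective eFun := by
    constructor
    · intro σ₁ σ₂ h
      have : ∀ g, φ (σ₁ g) = φ (σ₂ g) := fun g =>
        congrArg (fun (f : G →* H) => f g) (Subtype.ext_iff.mp h)
      ext g
      exact hφ (this g)
    · rintro ⟨ψ, hinj, hrange⟩
      let eφ : G ≃* φ.range := MulEquiv.ofBijective φ.rangeRestrict
        ⟨fun a b h => hφ (Subtype.ext_iff.mp h), φ.rangeRestrict_surjective⟩
      have hmem : ∀ g, ψ g ∈ φ.range := fun g => hrange ▸ ⟨g, rfl⟩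
      let ψ' : G →* φ.range := ψ.codRestrict _ hmem
      let σ0 : G →* G := (eφ.symm.toMonoidHom).comp ψ'
      have hσ0 : ∀ g, φ (σ0 g) = ψ g := fun g =>
        congrArg Subtype.val (eφ.apply_symm_apply (ψ' g))
      have hσ0inj : Function.Injective σ0 := by
        intro a b h
        apply hinj
        rw [← hσ0 a, ← hσ0 b, h]
      have hσ0bij : Function.Bijective σ0 := Finite.injective_iff_bijective.mp hσ0inj
      refine ⟨(MulEquiv.ofBijective σ0 hσ0bij : MulAut G), ?_⟩
      apply Subtype.ext
      ext g
      exact hσ0 g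
  let e : MulAut G ≃ {ψ : G →* H // Function.Injective ψ ∧ ψ.range = φ.range} :=
    Equiv.ofBijective eFun eBij
  -- transport the relation on the subtype to the right-coset relation of M
  have hrel : ∀ σ₁ σ₂ : MulAut G,
      (QuotientGroup.rightRel M) σ₁ σ₂ ↔
      (∃ n ∈ Subgroup.normalizer (φ.range : Set H), ∀ g : G, (e σ₂).1 g = n * (e σ₁).1 g * n⁻¹) := by
    intro σ₁ σ₂
    rw [QuotientGroup.rightRel_apply]
    constructor
    · rintro ⟨n, hn⟩
      refine ⟨(n : H), n.2, fun g => ?_⟩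
      have : σ₂ = α n * σ₁ := by
        rw [hn]; group
      show φ (σ₂ g) = _
      rw [this]
      show φ (α n (σ₁ g)) = _
      rw [hα n (σ₁ g)]
      rfl
    · rintro ⟨n, hn, h⟩
      refine ⟨⟨n, hn⟩, ?_⟩
      have : σ₂ = α ⟨n, hn⟩ * σ₁ := by
        ext g
        apply hφ
        show φ (σ₂ g) = φ (α ⟨n, hn⟩ (σ₁ g))
        rw [hα ⟨n, hn⟩ (σ₁ g)]
        exact h g
      rw [this]; group
  -- LHS = M.index
  have lhs_eq : Nat.card (Quot (fun (ψ₁ ψ₂ : {ψ : G →* H // Function.Injective ψ ∧ ψ.range = φ.range}) =>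
      ∃ n ∈ Subgroup.normalizer (φ.range : Set H), ∀ g : G, ψ₂.1 g = n * ψ₁.1 g * n⁻¹)) = M.index := by
    have e1 : Quotient (QuotientGroup.rightRel M) ≃
        Quot (fun (ψ₁ ψ₂ : {ψ : G →* H // Function.Injective ψ ∧ ψ.range = φ.range}) =>
          ∃ n ∈ Subgroup.normalizer (φ.range : Set H), ∀ g : G, ψ₂.1 g = n * ψ₁.1 g * n⁻¹) := by
      refine Quot.congr e ?_
      intro σ₁ σ₂
      exact hrel σ₁ σ₂
    rw [← Nat.card_congr e1,
      Nat.card_congr (QuotientGroup.quotientRightRelEquivQuotientLeftRel M)]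
    rfl
  rw [lhs_eq]
  -- Nat.card (Quot (innRel G)) = I.index
  have out_eq : Nat.card (Quot (innRel G)) = I.index := by
    have e2 : Quot (innRel G) ≃ Quotient (QuotientGroup.rightRel I) := by
      refine Quot.congrRight ?_
      intro a b
      rw [QuotientGroup.rightRel_apply]
      exact innRel_iff a b
    rw [Nat.card_congr e2,
      Nat.card_congr (QuotientGroup.quotientRightRelEquivQuotientLeftRel I)]
    rfl
  rw [out_eq]
  -- the image of α in Out(G) has cardinality relindex
  have img_eq : Nat.card (Set.range fun n : Subgroup.normalizer (φ.range : Set H) => Quot.mk (innRel G) (α n)) =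
      I.relIndex M := by
    let F : M → Quot (innRel G) := fun m => Quot.mk (innRel G) (m : MulAut G)
    have hranges : Set.range F = Set.range (fun n : Subgroup.normalizer (φ.range : Set H) => Quot.mk (innRel G) (α n)) := by
      ext q
      constructor
      · rintro ⟨⟨_, n, rfl⟩, rfl⟩
        exact ⟨n, rfl⟩
      · rintro ⟨n, rfl⟩
        exact ⟨⟨α n, n, rfl⟩, rfl⟩
    have hker : ∀ m₁ m₂ : M, (Setoid.ker F) m₁ m₂ ↔
        (QuotientGroup.rightRel (I.subgroupOf M)) m₁ m₂ := by
      intro m₁ m₂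
      rw [QuotientGroup.rightRel_apply]
      show Quot.mk _ _ = Quot.mk _ _ ↔ _
      rw [Quot.eq, (innRel_equivalence G).eqvGen_iff, innRel_iff,
        Subgroup.mem_subgroupOf]
      rfl
    have e3 : Quotient (Setoid.ker F) ≃ Quotient (QuotientGroup.rightRel (I.subgroupOf M)) :=
      Quot.congrRight hker
    rw [← hranges, ← Nat.card_congr (Setoid.quotientKerEquivRange F),
      Nat.card_congr e3,
      Nat.card_congr (QuotientGroup.quotientRightRelEquivQuotientLeftRel (I.subgroupOf M))]
    rfl
  rw [img_eq]
  -- index arithmetic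
  have hne : I.relIndex M ≠ 0 := by
    have : Finite M := Subtype.finite
    exact Subgroup.index_ne_zero_of_finite
  rw [← Subgroup.relIndex_mul_index hIM,
    Nat.mul_div_cancel_left _ (Nat.pos_of_ne_zero hne)]
end

section
/- For the group G = C_t × D_n with t ≥ 2 and n ≥ 3 odd, acting linearly on P² = P(1 ⊕ V_{χ,ψ}) where χ is a primitive character of C_t and V_ψ is the faithful 2-dimensional representation of D_n induced from a primitive character ψ of C_n ⊂ D_n: the generic stabilizer of the invariant line P(V_{χ,ψ}) is C_t × 1, and it acts on the normal directions to this line with character χ⁻¹ (equivalently, the fixed point [1:0:0] has C_t acting on the tangent space P(V) with weights (χ, χ)). -/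
open Matrix

/-- For `G = C_t × D_n` (`t ≥ 2`, `n ≥ 3` odd) acting on `P² = P(1 ⊕ V_{χ,ψ})`:
the generic stabilizer of the invariant line `{x₁ = 0}` is `C_t × 1`, acting on the line
by the scalar `χ` and hence on the normal direction with character `χ⁻¹`; equivalently,
at the fixed point the tangent weights are `(χ, χ)`. -/
theorem stmt_15 (t n : ℕ) (ht : 2 ≤ t) (hn : 3 ≤ n) (hodd : Odd n)
    (χfun : Multiplicative (ZMod t) →* ℂˣ) (hχ : Function.Injective χfun)
    (ψfun : Multiplicative (ZMod n) →* ℂˣ) (hψ : Function.Injective ψfun)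
    (ρ : Multiplicative (ZMod t) × DihedralGroup n →* GL (Fin 3) ℂ)
    (hρ : Function.Injective ρ)
    (hρr : ∀ (a : Multiplicative (ZMod t)) (j : ZMod n),
      ((ρ (a, DihedralGroup.r j) : GL (Fin 3) ℂ) : Matrix (Fin 3) (Fin 3) ℂ) =
        Matrix.diagonal
          ![1, ((χfun a * ψfun (Multiplicative.ofAdd j) : ℂˣ) : ℂ),
            ((χfun a * (ψfun (Multiplicative.ofAdd j))⁻¹ : ℂˣ) : ℂ)])
    (hρsr : ∀ (a : Multiplicative (ZMod t)) (j : ZMod n),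
      ((ρ (a, DihedralGroup.sr j) : GL (Fin 3) ℂ) : Matrix (Fin 3) (Fin 3) ℂ) =
        !![1, 0, 0;
           0, 0, ((χfun a * (ψfun (Multiplicative.ofAdd j))⁻¹ : ℂˣ) : ℂ);
           0, ((χfun a * ψfun (Multiplicative.ofAdd j) : ℂˣ) : ℂ), 0]) :
    -- the generic stabilizer of the line `{x₁ = 0}` is `C_t × 1`
    (∀ g : Multiplicative (ZMod t) × DihedralGroup n,
      (∀ v : Fin 3 → ℂ, v 0 = 0 → ∃ c : ℂ,
        Matrix.mulVec ((ρ g : GL (Fin 3) ℂ) : Matrix (Fin 3) (Fin 3) ℂ) v = c • v) ↔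
      g.2 = 1) ∧
    -- it acts on the line by the scalar `χ` and on the normal direction by `χ⁻¹`
    (∀ a : Multiplicative (ZMod t), ∃ c : ℂˣ,
      (∀ v : Fin 3 → ℂ, v 0 = 0 →
        Matrix.mulVec ((ρ (a, 1) : GL (Fin 3) ℂ) : Matrix (Fin 3) (Fin 3) ℂ) v = (c : ℂ) • v) ∧
      Matrix.mulVec ((ρ (a, 1) : GL (Fin 3) ℂ) : Matrix (Fin 3) (Fin 3) ℂ)
          (Pi.single 0 1 : Fin 3 → ℂ) =
        ((c * (χfun a)⁻¹ : ℂˣ) : ℂ) • (Pi.single (0 : Fin 3) 1 : Fin 3 → ℂ)) ∧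
    -- equivalently, the tangent weights at the fixed point `[1:0:0]` are `(χ, χ)`
    (∀ a : Multiplicative (ZMod t),
      ((ρ (a, 1) : GL (Fin 3) ℂ) : Matrix (Fin 3) (Fin 3) ℂ) =
        Matrix.diagonal ![1, (χfun a : ℂ), (χfun a : ℂ)]) := by
  have hone : ∀ a : Multiplicative (ZMod t),
      ((ρ (a, 1) : GL (Fin 3) ℂ) : Matrix (Fin 3) (Fin 3) ℂ) =
        Matrix.diagonal ![1, (χfun a : ℂ), (χfun a : ℂ)] := by
    intro a
    have h := hρr a 0
    rw [← DihedralGroup.one_def] at h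
    simpa using h
  have hscalar : ∀ (a : Multiplicative (ZMod t)) (v : Fin 3 → ℂ), v 0 = 0 →
      Matrix.mulVec ((ρ (a, 1) : GL (Fin 3) ℂ) : Matrix (Fin 3) (Fin 3) ℂ) v
        = ((χfun a : ℂˣ) : ℂ) • v := by
    intro a v hv
    rw [hone a]
    funext i
    rw [Matrix.mulVec_diagonal]
    fin_cases i <;> simp [hv]
  refine ⟨?_, ?_, hone⟩
  · rintro ⟨a, x⟩
    constructor
    · intro h
      cases x with
      | r j =>
        show DihedralGroup.r j = 1
        obtain ⟨c, hc⟩ := h ![0, 1, 1] rfl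
        rw [hρr] at hc
        have h1 := congr_fun hc 1
        have h2 := congr_fun hc 2
        rw [Matrix.mulVec_diagonal] at h1 h2
        simp at h1 h2
        have hu2 : ψfun (Multiplicative.ofAdd j) = (ψfun (Multiplicative.ofAdd j))⁻¹ := by
          apply Units.ext
          rw [Units.val_inv_eq_inv_val]
          exact mul_left_cancel₀ (Units.ne_zero (χfun a)) (h1.trans h2.symm)
        have hone' : ψfun (Multiplicative.ofAdd j) * ψfun (Multiplicative.ofAdd j) = 1 := by
          nth_rewrite 2 [hu2]
          exact mul_inv_cancel _
        have hj : Multiplicative.ofAdd j * Multiplicative.ofAdd j = 1 :=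
          hψ (by rw [_root_.map_mul, MonoidHom.map_one]; exact hone')
        have hjj : j + j = 0 := by
          have := hj
          rwa [← ofAdd_add, ofAdd_eq_one] at this
        have h2u : IsUnit (2 : ZMod n) := by
          have hcop : Nat.Coprime 2 n := Nat.coprime_two_left.mpr hodd
          exact (ZMod.isUnit_iff_coprime 2 n).mpr hcop
        have hj0 : j = 0 := by
          have h2j : (2 : ZMod n) * j = 0 := by rw [two_mul]; exact hjj
          rcases h2u with ⟨u, hu'⟩
          calc j = (u⁻¹ : (ZMod n)ˣ) * ((2 : ZMod n) * j) := by
                  rw [← mul_assoc, ← hu', Units.inv_mul, one_mul]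
            _ = 0 := by rw [h2j, mul_zero]
        rw [hj0, DihedralGroup.one_def]
      | sr j =>
        exfalso
        obtain ⟨c, hc⟩ := h ![0, 1, 0] rfl
        rw [hρsr] at hc
        have h2 := congr_fun hc 2
        simp [Matrix.mulVec, dotProduct, Fin.sum_univ_three] at h2
    · rintro rfl
      intro v hv
      exact ⟨_, hscalar a v hv⟩
  · intro a
    refine ⟨χfun a, hscalar a, ?_⟩
    rw [hone a]
    funext i
    rw [Matrix.mulVec_diagonal]
    fin_cases i <;> simp [Pi.single]
end
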